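/- Let f : ℝⁿ → ℝ be a three-times continuously differentiable function such that along every line the restriction s ↦ f(l + s·d) is a quadratic polynomial in s with positive leading coefficient (for all l, d ∈ ℝⁿ with d ≠ 0). Then f has the form f(x) = c + rᵀx + xᵀQx for some c ∈ ℝ, r ∈ ℝⁿ and a positive definite symmetric matrix Q ∈ ℝⁿˣⁿ. -/

import Mathlib

open Matrix

lemma aux_hasDerivAt {n : ℕ} (g : EuclideanSpace ℝ (Fin n) → ℝ) (hg : Differentiable ℝ g)
    (x : EuclideanSpace ℝ (Fin n)) (t : ℝ) :
    HasDerivAt (fun t : ℝ => g (t • x)) ((fderiv ℝ g (t • x)) x) t := by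
  have h1 : HasDerivAt (fun t : ℝ => t • x) x t := by
    simpa using (hasDerivAt_id t).smul_const x
  exact ((hg (t • x)).hasFDerivAt.comp_hasDerivAt t h1)

lemma aux_lin {n : ℕ} (g : EuclideanSpace ℝ (Fin n) → ℝ) (hg : Differentiable ℝ g)
    (x : EuclideanSpace ℝ (Fin n)) (hom : ∀ t : ℝ, g (t • x) = t * g x) :
    (fderiv ℝ g 0) x = g x := by
  have h1 : HasDerivAt (fun t : ℝ => g (t • x)) ((fderiv ℝ g 0) x) 0 := by
    simpa using aux_hasDerivAt g hg x 0
  have h2 : HasDerivAt (fun t : ℝ => g (t • x)) (g x) 0 := by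
    have : HasDerivAt (fun t : ℝ => t * g x) (g x) 0 := by
      simpa using (hasDerivAt_id (0:ℝ)).mul_const (g x)
    exact this.congr_of_eventuallyEq (by filter_upwards with t using (hom t))
  exact h1.unique h2

lemma aux_quad {n : ℕ} (g : EuclideanSpace ℝ (Fin n) → ℝ) (hg : ContDiff ℝ 2 g)
    (x : EuclideanSpace ℝ (Fin n)) (hom : ∀ t : ℝ, g (t • x) = t ^ 2 * g x) :
    ((fderiv ℝ (fderiv ℝ g) 0) x) x = 2 * g x := by
  have hdg : Differentiable ℝ g := hg.differentiable (by norm_num)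
  have h1 : ∀ t : ℝ, (fderiv ℝ g (t • x)) x = 2 * t * g x := by
    intro t
    have ha := aux_hasDerivAt g hdg x t
    have hb : HasDerivAt (fun t : ℝ => g (t • x)) (2 * t * g x) t := by
      have : HasDerivAt (fun t : ℝ => t ^ 2 * g x) (2 * t * g x) t := by
        simpa [mul_comm] using (hasDerivAt_pow 2 t).mul_const (g x)
      exact this.congr_of_eventuallyEq (by filter_upwards with s using (hom s))
    exact ha.unique hb
  have hG : ContDiff ℝ 1 (fderiv ℝ g) := hg.fderiv_right (by norm_num)
  have h2 : HasDerivAt (fun t : ℝ => (fderiv ℝ g (t • x)) x)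
      (((fderiv ℝ (fderiv ℝ g) 0) x) x) 0 := by
    have hline : HasDerivAt (fun t : ℝ => t • x) x (0 : ℝ) := by
      simpa using (hasDerivAt_id (0:ℝ)).smul_const x
    have hF : HasFDerivAt (fderiv ℝ g) (fderiv ℝ (fderiv ℝ g) 0) ((0:ℝ) • x) := by
      simpa using ((hG.differentiable one_ne_zero) 0).hasFDerivAt
    have h4 : HasDerivAt (fun t : ℝ => fderiv ℝ g (t • x)) (fderiv ℝ (fderiv ℝ g) 0 x) 0 :=
      hF.comp_hasDerivAt (0:ℝ) hline
    have := h4.clm_apply (hasDerivAt_const (0:ℝ) x)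
    simpa using this
  have h3 : HasDerivAt (fun t : ℝ => (fderiv ℝ g (t • x)) x) (2 * g x) 0 := by
    have : HasDerivAt (fun t : ℝ => 2 * t * g x) (2 * g x) 0 := by
      simpa [mul_assoc] using ((hasDerivAt_id (0:ℝ)).const_mul 2).mul_const (g x)
    exact this.congr_of_eventuallyEq (by filter_upwards with s using (h1 s))
  exact h2.unique h3

lemma aux_basis {n : ℕ} (x : EuclideanSpace ℝ (Fin n)) :
    x = ∑ i, x i • EuclideanSpace.single i (1:ℝ) := by
  have := (EuclideanSpace.basisFun (Fin n) ℝ).sum_repr x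
  simpa [EuclideanSpace.basisFun_apply, EuclideanSpace.basisFun_repr] using this.symm

lemma aux_bilin {n : ℕ} (B : EuclideanSpace ℝ (Fin n) →L[ℝ] EuclideanSpace ℝ (Fin n) →L[ℝ] ℝ)
    (x : EuclideanSpace ℝ (Fin n)) :
    B x x = ∑ i, ∑ j, x i * x j * B (EuclideanSpace.single i 1) (EuclideanSpace.single j 1) := by
  conv_lhs => rw [aux_basis x]
  simp only [map_sum, _root_.map_smul, ContinuousLinearMap.sum_apply,
    ContinuousLinearMap.smul_apply, smul_eq_mul, ContinuousLinearMap.coe_sum', Finset.sum_apply]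
  rw [Finset.sum_comm]
  refine Finset.sum_congr rfl fun i _ => ?_
  rw [Finset.mul_sum]
  exact Finset.sum_congr rfl fun j _ => by ring

/-- If a C³ function on ℝⁿ restricts to a quadratic with positive leading
coefficient along every line (in every unit direction), then it is a quadratic
form `c + rᵀx + xᵀQx` with `Q` symmetric positive definite. -/
theorem stmt0 (n : ℕ) (f : EuclideanSpace ℝ (Fin n) → ℝ)
    (hf : ContDiff ℝ 3 f)
    (hline : ∀ l d : EuclideanSpace ℝ (Fin n), ‖d‖ = 1 →
      ∃ a b c : ℝ, 0 < a ∧ ∀ s : ℝ, f (l + s • d) = a * s ^ 2 + b * s + c) :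
    ∃ (c : ℝ) (r : EuclideanSpace ℝ (Fin n)) (Q : Matrix (Fin n) (Fin n) ℝ),
      Q.IsSymm ∧ Q.PosDef ∧
      ∀ x : EuclideanSpace ℝ (Fin n),
        f x = c + (fun i => r i) ⬝ᵥ (fun i => x i) +
          (fun i => x i) ⬝ᵥ Q.mulVec (fun i => x i) := by
  set g : EuclideanSpace ℝ (Fin n) → ℝ := fun x => (f x - f (-x)) / 2 with hgdef
  set h : EuclideanSpace ℝ (Fin n) → ℝ := fun x => (f x + f (-x)) / 2 - f 0 with hhdef
  have hg3 : ContDiff ℝ 3 g := (hf.sub (hf.comp contDiff_neg)).div_const 2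
  have hh3 : ContDiff ℝ 3 h :=
    ((hf.add (hf.comp contDiff_neg)).div_const 2).sub contDiff_const
  -- key line structure
  have hkey : ∀ x : EuclideanSpace ℝ (Fin n), x ≠ 0 →
      ∃ a b : ℝ, 0 < a ∧ ∀ t : ℝ, f (t • x) = a * t ^ 2 * ‖x‖ ^ 2 + b * (t * ‖x‖) + f 0 := by
    intro x hx
    have hnx : ‖x‖ ≠ 0 := norm_ne_zero_iff.mpr hx
    set d : EuclideanSpace ℝ (Fin n) := ‖x‖⁻¹ • x with hddef
    have hd : ‖d‖ = 1 := by
      rw [hddef, norm_smul, norm_inv, norm_norm]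
      field_simp
    obtain ⟨a, b, c0, ha, hq⟩ := hline 0 d hd
    have hc0 : f 0 = c0 := by simpa using hq 0
    refine ⟨a, b, ha, fun t => ?_⟩
    have hsd : (t * ‖x‖) • d = t • x := by
      rw [hddef, smul_smul]
      congr 1
      field_simp
    have := hq (t * ‖x‖)
    rw [zero_add, hsd] at this
    rw [this, hc0]; ring
  -- homogeneity
  have ghom : ∀ (x : EuclideanSpace ℝ (Fin n)) (t : ℝ), g (t • x) = t * g x := by
    intro x t
    by_cases hx : x = 0
    · simp [hx, hgdef]
    · obtain ⟨a, b, ha, hft⟩ := hkey x hx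
      have h1 := hft t
      have h2 : f (-(t • x)) = a * t ^ 2 * ‖x‖ ^ 2 - b * (t * ‖x‖) + f 0 := by
        have := hft (-t)
        rw [neg_smul] at this
        rw [this]; ring
      have h3 := hft 1
      have h4 : f (-((1:ℝ) • x)) = a * (1:ℝ) ^ 2 * ‖x‖ ^ 2 - b * ((1:ℝ) * ‖x‖) + f 0 := by
        have := hft (-1)
        rw [neg_smul] at this
        rw [this]; ring
      rw [one_smul] at h3 h4
      simp only [hgdef]
      rw [h1, h2, h3, h4]; ring
  have hhom : ∀ (x : EuclideanSpace ℝ (Fin n)) (t : ℝ), h (t • x) = t ^ 2 * h x := by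
    intro x t
    by_cases hx : x = 0
    · simp [hx, hhdef]
    · obtain ⟨a, b, ha, hft⟩ := hkey x hx
      have h1 := hft t
      have h2 : f (-(t • x)) = a * t ^ 2 * ‖x‖ ^ 2 - b * (t * ‖x‖) + f 0 := by
        have := hft (-t)
        rw [neg_smul] at this
        rw [this]; ring
      have h3 := hft 1
      have h4 : f (-((1:ℝ) • x)) = a * (1:ℝ) ^ 2 * ‖x‖ ^ 2 - b * ((1:ℝ) * ‖x‖) + f 0 := by
        have := hft (-1)
        rw [neg_smul] at this
        rw [this]; ring
      rw [one_smul] at h3 h4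
      simp only [hhdef]
      rw [h1, h2, h3, h4]; ring
  have hpos : ∀ x : EuclideanSpace ℝ (Fin n), x ≠ 0 → 0 < h x := by
    intro x hx
    obtain ⟨a, b, ha, hft⟩ := hkey x hx
    have h3 := hft 1
    have h4 : f (-((1:ℝ) • x)) = a * (1:ℝ) ^ 2 * ‖x‖ ^ 2 - b * ((1:ℝ) * ‖x‖) + f 0 := by
      have := hft (-1)
      rw [neg_smul] at this
      rw [this]; ring
    rw [one_smul] at h3 h4
    have hxpos : 0 < ‖x‖ := norm_pos_iff.mpr hx
    have : h x = a * ‖x‖ ^ 2 := by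
      simp only [hhdef]; rw [h3, h4]; ring
    rw [this]
    positivity
  -- linear part
  set L := fderiv ℝ g 0 with hLdef
  have hgL : ∀ x, g x = L x := fun x =>
    (aux_lin g (hg3.differentiable (by norm_num)) x (ghom x)).symm
  -- quadratic part
  set B := fderiv ℝ (fderiv ℝ h) 0 with hBdef
  have hhB : ∀ x, B x x = 2 * h x := fun x =>
    aux_quad h (hh3.of_le (by norm_num)) x (hhom x)
  set e : Fin n → EuclideanSpace ℝ (Fin n) := fun i => EuclideanSpace.single i (1:ℝ) with hedef
  set Q : Matrix (Fin n) (Fin n) ℝ :=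
    fun i j => (h (e i + e j) - h (e i) - h (e j)) / 2 with hQdef
  have hQB : ∀ i j, Q i j = (B (e i) (e j) + B (e j) (e i)) / 4 := by
    intro i j
    have h1 := hhB (e i + e j)
    have h2 := hhB (e i)
    have h3 := hhB (e j)
    have hexp : B (e i + e j) (e i + e j)
        = B (e i) (e i) + B (e i) (e j) + B (e j) (e i) + B (e j) (e j) := by
      simp only [map_add, ContinuousLinearMap.add_apply]; ring
    rw [hexp] at h1
    simp only [hQdef]
    linear_combination (h2 + h3 - h1) / 4
  -- quadratic identity
  have hxQx : ∀ x : EuclideanSpace ℝ (Fin n),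
      (fun i => x i) ⬝ᵥ Q.mulVec (fun i => x i) = h x := by
    intro x
    have hb : B x x = ∑ i, ∑ j, x i * x j * B (e i) (e j) := aux_bilin B x
    have hb2 : ∑ i, ∑ j, x i * x j * B (e j) (e i) = B x x := by
      rw [Finset.sum_comm, hb]
      exact Finset.sum_congr rfl fun i _ => Finset.sum_congr rfl fun j _ => by ring
    have hexpand : (fun i => x i) ⬝ᵥ Q.mulVec (fun i => x i)
        = ∑ i, ∑ j, x i * x j * Q i j := by
      simp only [dotProduct, Matrix.mulVec, Finset.mul_sum]
      exact Finset.sum_congr rfl fun i _ => Finset.sum_congr rfl fun j _ => by ring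
    rw [hexpand]
    have : ∑ i, ∑ j, x i * x j * Q i j
        = ∑ i, ∑ j, (x i * x j * B (e i) (e j) / 4 + x i * x j * B (e j) (e i) / 4) := by
      refine Finset.sum_congr rfl fun i _ => Finset.sum_congr rfl fun j _ => ?_
      rw [hQB i j]; ring
    rw [this]
    simp only [Finset.sum_add_distrib]
    have e1 : ∑ i, ∑ j, x i * x j * B (e i) (e j) / 4 = B x x / 4 := by
      rw [hb, Finset.sum_div]
      exact Finset.sum_congr rfl fun i _ => by rw [Finset.sum_div]
    have e2 : ∑ i, ∑ j, x i * x j * B (e j) (e i) / 4 = B x x / 4 := by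
      rw [← hb2, Finset.sum_div]
      exact Finset.sum_congr rfl fun i _ => by rw [Finset.sum_div]
    rw [e1, e2]
    linear_combination (hhB x) / 2
  -- linear identity
  have hrx : ∀ x : EuclideanSpace ℝ (Fin n),
      (fun i => g (e i)) ⬝ᵥ (fun i => x i) = g x := by
    intro x
    rw [hgL x]
    conv_rhs => rw [aux_basis x]
    rw [map_sum]
    simp only [dotProduct]
    refine Finset.sum_congr rfl fun i _ => ?_
    rw [_root_.map_smul, smul_eq_mul, ← hgL (e i), hedef]
    ring
  refine ⟨f 0, WithLp.toLp 2 (fun i => g (e i)), Q, ?_, ?_, ?_⟩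
  · -- symmetric
    ext i j
    rw [Matrix.transpose_apply]
    simp only [hQdef]
    rw [add_comm (e j) (e i)]
    ring
  · -- positive definite
    rw [Matrix.posDef_iff_dotProduct_mulVec]
    constructor
    · ext i j
      rw [Matrix.conjTranspose_apply, star_trivial]
      simp only [hQdef]
      rw [add_comm (e j) (e i)]
      ring
    · intro y hy
      have hy' : WithLp.toLp 2 y ≠ (0 : EuclideanSpace ℝ (Fin n)) := by
        simpa using hy
      have := hpos _ hy'
      have hq := hxQx (WithLp.toLp 2 y)
      simpa [star_trivial] using lt_of_lt_of_eq this hq.symm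
  · intro x
    simp only [PiLp.toLp_apply]
    rw [hxQx x, hrx x]
    simp only [hgdef, hhdef]
    ring
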